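/- Let M ⊆ ℝ^{n+1} be a Lebesgue-measurable set that is directed with respect to v ∈ ℝ^{n+1} \ {0}, and let x₀ ∈ ∂M (measure-theoretic boundary). Then exactly one of the following two possibilities occurs: (1) there exists t ≠ 0 with x₀ + t·v ∈ ∂M; (2) for all t > 0, x₀ + t·v ∈ ∁_μM and x₀ − t·v ∈ M_μ. -/

import Mathlib

open MeasureTheory Metric

/-- Approximate density of a set `M` at `x` with respect to radius `ρ`. -/
noncomputable def approxDensity {d : ℕ} (M : Set (EuclideanSpace ℝ (Fin d))) (ρ : ℝ)
    (x : EuclideanSpace ℝ (Fin d)) : ENNReal :=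
  volume (M ∩ ball x ρ) / volume (ball x ρ)

/-- `M` is directed with respect to `v`. -/
def DirectedWrt {d : ℕ} (M : Set (EuclideanSpace ℝ (Fin d)))
    (v : EuclideanSpace ℝ (Fin d)) : Prop :=
  ∀ x : EuclideanSpace ℝ (Fin d), ∀ ρ : ℝ, 0 < ρ →
    Antitone (fun t : ℝ => approxDensity M ρ (x + t • v))

/-- Measure-theoretic interior. -/
def mInterior {d : ℕ} (M : Set (EuclideanSpace ℝ (Fin d))) :
    Set (EuclideanSpace ℝ (Fin d)) :=
  {x | ∃ ρ > (0 : ℝ), volume (ball x ρ \ M) = 0}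

/-- Measure-theoretic exterior. -/
def mExterior {d : ℕ} (M : Set (EuclideanSpace ℝ (Fin d))) :
    Set (EuclideanSpace ℝ (Fin d)) :=
  {x | ∃ ρ > (0 : ℝ), volume (M ∩ ball x ρ) = 0}

/-- Measure-theoretic boundary. -/
def mBoundary {d : ℕ} (M : Set (EuclideanSpace ℝ (Fin d))) :
    Set (EuclideanSpace ℝ (Fin d)) :=
  (mInterior M ∪ mExterior M)ᶜ

lemma density_le_one {d : ℕ} (M : Set (EuclideanSpace ℝ (Fin d))) (ρ : ℝ)
    (x : EuclideanSpace ℝ (Fin d)) : approxDensity M ρ x ≤ 1 := by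
  apply ENNReal.div_le_of_le_mul
  rw [one_mul]
  exact measure_mono Set.inter_subset_right

lemma density_eq_one_iff {d : ℕ} {M : Set (EuclideanSpace ℝ (Fin d))}
    (hM : MeasurableSet M) {ρ : ℝ} (hρ : 0 < ρ) (x : EuclideanSpace ℝ (Fin d)) :
    approxDensity M ρ x = 1 ↔ volume (ball x ρ \ M) = 0 := by
  have h0 : volume (ball x ρ) ≠ 0 := (measure_ball_pos _ _ hρ).ne'
  have ht : volume (ball x ρ) ≠ ⊤ := measure_ball_lt_top.ne
  have hi : volume (ball x ρ ∩ M) ≠ ⊤ :=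
    ((measure_mono Set.inter_subset_left).trans_lt measure_ball_lt_top).ne
  have hkey : volume (ball x ρ ∩ M) + volume (ball x ρ \ M) = volume (ball x ρ) :=
    measure_inter_add_diff _ hM
  rw [approxDensity, ENNReal.div_eq_one_iff h0 ht, Set.inter_comm]
  constructor
  · intro h
    rw [h] at hkey
    nth_rewrite 2 [← add_zero (volume (ball x ρ))] at hkey
    exact (ENNReal.add_right_inj ht).mp hkey
  · intro h
    rw [h, add_zero] at hkey
    exact hkey

lemma density_eq_zero_iff {d : ℕ} (M : Set (EuclideanSpace ℝ (Fin d)))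
    {ρ : ℝ} (hρ : 0 < ρ) (x : EuclideanSpace ℝ (Fin d)) :
    approxDensity M ρ x = 0 ↔ volume (M ∩ ball x ρ) = 0 := by
  have ht : volume (ball x ρ) ≠ ⊤ := measure_ball_lt_top.ne
  rw [approxDensity, ENNReal.div_eq_zero_iff]
  simp [ht]

theorem boundary_point_dichotomy {n : ℕ}
    (M : Set (EuclideanSpace ℝ (Fin (n + 1)))) (hM : MeasurableSet M)
    (v : EuclideanSpace ℝ (Fin (n + 1))) (hv : v ≠ 0)
    (hdir : DirectedWrt M v)
    (x₀ : EuclideanSpace ℝ (Fin (n + 1))) (hx₀ : x₀ ∈ mBoundary M) :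
    Xor' (∃ t : ℝ, t ≠ 0 ∧ x₀ + t • v ∈ mBoundary M)
      (∀ t : ℝ, 0 < t → x₀ + t • v ∈ mExterior M ∧ x₀ - t • v ∈ mInterior M) := by
  have hx₀' : x₀ ∉ mInterior M ∧ x₀ ∉ mExterior M := by
    have := hx₀
    simp only [mBoundary, Set.mem_compl_iff, Set.mem_union] at this
    exact not_or.mp this
  have hzero : x₀ + (0 : ℝ) • v = x₀ := by simp
  -- key 1 : for t > 0, x₀ + t • v ∉ mInterior M
  have key1 : ∀ t : ℝ, 0 < t → x₀ + t • v ∉ mInterior M := by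
    rintro t ht ⟨ρ, hρ, hnull⟩
    apply hx₀'.1
    refine ⟨ρ, hρ, ?_⟩
    rw [← density_eq_one_iff hM hρ]
    have h1 : approxDensity M ρ (x₀ + t • v) = 1 := (density_eq_one_iff hM hρ _).mpr hnull
    have h2 := hdir x₀ ρ hρ (le_of_lt ht)
    simp only [hzero] at h2
    rw [h1] at h2
    exact le_antisymm (density_le_one M ρ x₀) h2
  -- key 2 : for t < 0, x₀ + t • v ∉ mExterior M
  have key2 : ∀ t : ℝ, t < 0 → x₀ + t • v ∉ mExterior M := by
    rintro t ht ⟨ρ, hρ, hnull⟩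
    apply hx₀'.2
    refine ⟨ρ, hρ, ?_⟩
    rw [← density_eq_zero_iff M hρ]
    have h1 : approxDensity M ρ (x₀ + t • v) = 0 := (density_eq_zero_iff M hρ _).mpr hnull
    have h2 := hdir x₀ ρ hρ (le_of_lt ht)
    simp only [hzero] at h2
    rw [h1] at h2
    exact le_antisymm h2 zero_le
  have hsub : ∀ t : ℝ, x₀ - t • v = x₀ + (-t) • v := by
    intro t; rw [neg_smul, sub_eq_add_neg]
  by_cases hA : ∃ t : ℝ, t ≠ 0 ∧ x₀ + t • v ∈ mBoundary M
  · left
    refine ⟨hA, ?_⟩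
    rintro hB
    obtain ⟨t, ht0, hbd⟩ := hA
    simp only [mBoundary, Set.mem_compl_iff, Set.mem_union] at hbd
    rcases lt_or_gt_of_ne ht0 with hneg | hpos
    · have := (hB (-t) (by linarith)).2
      rw [hsub, neg_neg] at this
      exact hbd (Or.inl this)
    · exact hbd (Or.inr (hB t hpos).1)
  · right
    refine ⟨?_, hA⟩
    intro t ht
    push_neg at hA
    constructor
    · have h := hA t (ne_of_gt ht)
      simp only [mBoundary, Set.mem_compl_iff, Set.mem_union, not_not] at h
      rcases h with h | h
      · exact absurd h (key1 t ht)
      · exact h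
    · have h := hA (-t) (by simpa using ne_of_gt ht)
      simp only [mBoundary, Set.mem_compl_iff, Set.mem_union, not_not] at h
      rw [hsub]
      rcases h with h | h
      · exact h
      · exact absurd h (key2 (-t) (by linarith))
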